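/- Let s > 2 and let D be the ℓ×ℓ tridiagonal matrix with diagonal entries s and off-diagonal entries −1. Then D is invertible and its inverse is given by (D⁻¹)_{ij} = U_{i−1}(s/2)·U_{ℓ−j}(s/2)/U_ℓ(s/2) for i ≤ j, and (D⁻¹)_{ij} = U_{j−1}(s/2)·U_{ℓ−i}(s/2)/U_ℓ(s/2) for i > j, where U_n is the Chebyshev polynomial of the second kind. -/

import Mathlib

open Polynomial Matrix

private lemma U_prod_aux (b : ℕ) : ∀ a : ℤ,
    Polynomial.Chebyshev.U ℝ (a + b + 1) =
      Polynomial.Chebyshev.U ℝ (a + 1) * Polynomial.Chebyshev.U ℝ (b : ℤ) -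
        Polynomial.Chebyshev.U ℝ a * Polynomial.Chebyshev.U ℝ ((b : ℤ) - 1) := by
  induction b using Nat.twoStepInduction with
  | zero => intro a; simp [Polynomial.Chebyshev.U_zero, Polynomial.Chebyshev.U_neg_one]
  | one =>
      intro a
      push_cast
      rw [show a + (1:ℤ) + 1 = a + 2 by ring, Polynomial.Chebyshev.U_add_two,
        Polynomial.Chebyshev.U_zero, Polynomial.Chebyshev.U_one]
      ring
  | more n ih1 ih2 =>
      intro a
      push_cast at ih1 ih2 ⊢
      rw [show a + ((n : ℤ) + 2) + 1 = (a + (n:ℤ) + 1) + 2 by ring,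
        Polynomial.Chebyshev.U_add_two ℝ (a + (n:ℤ) + 1),
        show a + (n : ℤ) + 1 + 1 = a + ((n : ℤ) + 1) + 1 by ring, ih2, ih1,
        show (n : ℤ) + 2 - 1 = (n : ℤ) + 1 by ring,
        Polynomial.Chebyshev.U_add_two ℝ (n : ℤ),
        show (n:ℤ) + 1 - 1 = (n:ℤ) by ring]
      have h5 := Polynomial.Chebyshev.U_add_one ℝ (n : ℤ)
      linear_combination (Polynomial.Chebyshev.U ℝ a) * h5

private lemma sum_indicator_int (ℓ : ℕ) (c : ℤ) (f : ℤ → ℝ) :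
    ∑ k : Fin ℓ, (if (k : ℤ) = c then f k else 0) = if 0 ≤ c ∧ c < ℓ then f c else 0 := by
  by_cases h : 0 ≤ c ∧ c < ℓ
  · rw [if_pos h]
    have hk : c.toNat < ℓ := by omega
    have hc : ((⟨c.toNat, hk⟩ : Fin ℓ) : ℤ) = c := by
      simp [Int.toNat_of_nonneg h.1]
    rw [Finset.sum_eq_single (⟨c.toNat, hk⟩ : Fin ℓ)]
    · rw [if_pos hc, hc]
    · intro k _ hne
      rw [if_neg]
      intro hkc
      exact hne (Fin.ext (show (k : ℕ) = c.toNat by omega))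
    · intro h'
      exact absurd (Finset.mem_univ _) h'
  · rw [if_neg h]
    apply Finset.sum_eq_zero
    intro k _
    rw [if_neg]
    have := k.isLt
    omega

/-- The inverse of the `ℓ×ℓ` tridiagonal Dirichlet matrix `D` (diagonal `s`,
off-diagonal `−1`) is the Dirichlet Green's function
`(D⁻¹)_{ij} = U_{min(i,j)−1}(s/2)·U_{ℓ−max(i,j)}(s/2)/U_ℓ(s/2)`
(indices `i, j ∈ {1,…,ℓ}`, here represented 0-based by `Fin ℓ`). -/
theorem tridiagonal_inverse_chebyshevU (s : ℝ) (hs : 2 < s) (ℓ : ℕ) (hℓ : 1 ≤ ℓ)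
    (D : Matrix (Fin ℓ) (Fin ℓ) ℝ)
    (hD : ∀ i j : Fin ℓ,
      D i j = if (i : ℤ) = j then s else if |(i : ℤ) - j| = 1 then -1 else 0) :
    IsUnit D ∧ ∀ i j : Fin ℓ,
      D⁻¹ i j =
        (Polynomial.Chebyshev.U ℝ (min (i : ℤ) (j : ℤ))).eval (s / 2) *
          (Polynomial.Chebyshev.U ℝ ((ℓ : ℤ) - 1 - max (i : ℤ) (j : ℤ))).eval (s / 2) /
          (Polynomial.Chebyshev.U ℝ ℓ).eval (s / 2) := by
  set x : ℝ := s / 2 with hxdef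
  have hx : 1 < x := by rw [hxdef]; linarith
  set u : ℤ → ℝ := fun n => (Polynomial.Chebyshev.U ℝ n).eval x with hu
  -- evaluation recurrence
  have hrec : ∀ n : ℤ, u (n + 2) = s * u (n + 1) - u n := by
    intro n
    have h := Polynomial.Chebyshev.U_add_two ℝ n
    simp only [hu, h, eval_sub, eval_mul, eval_ofNat, eval_X]
    rw [hxdef]; ring
  have hu0 : u 0 = 1 := by simp [hu, Polynomial.Chebyshev.U_zero]
  have hu1 : u 1 = s := by
    simp [hu, Polynomial.Chebyshev.U_one, hxdef]; ring
  have huneg : u (-1) = 0 := by simp [hu, Polynomial.Chebyshev.U_neg_one]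
  -- positivity and monotonicity
  have hposmono : ∀ n : ℕ, 0 < u n ∧ u n ≤ u ((n : ℤ) + 1) := by
    intro n
    induction n with
    | zero =>
        simp only [Nat.cast_zero, zero_add, hu0, hu1]
        exact ⟨one_pos, by linarith⟩
    | succ m ih =>
        obtain ⟨h1, h2⟩ := ih
        have h3 : 0 < u ((m : ℤ) + 1) := lt_of_lt_of_le h1 h2
        constructor
        · rw [show ((m+1:ℕ):ℤ) = (m:ℤ) + 1 by push_cast; ring]; exact h3
        · rw [show ((m+1:ℕ):ℤ) = (m:ℤ) + 1 by push_cast; ring,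
            show (m:ℤ) + 1 + 1 = (m:ℤ) + 2 by ring, hrec (m:ℤ)]
          nlinarith
  have hUpos : ∀ n : ℕ, 0 < u n := fun n => (hposmono n).1
  have hd : u ℓ ≠ 0 := ne_of_gt (hUpos ℓ)
  -- the Green's function
  set g : ℤ → ℤ → ℝ := fun a b =>
    u (min a b) * u ((ℓ : ℤ) - 1 - max a b) / u ℓ with hg
  set G : Matrix (Fin ℓ) (Fin ℓ) ℝ := Matrix.of (fun i j : Fin ℓ => g i j) with hG
  -- boundary vanishing
  have hbdry1 : ∀ b : ℤ, 0 ≤ b → g (-1) b = 0 := by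
    intro b hb
    simp only [hg]
    rw [min_eq_left (by omega), huneg, zero_mul, zero_div]
  have hbdry2 : ∀ b : ℤ, b < ℓ → g ℓ b = 0 := by
    intro b hb
    simp only [hg]
    rw [max_eq_left (by omega), show (ℓ:ℤ) - 1 - ℓ = -1 by ring, huneg, mul_zero, zero_div]
  -- main identity: D * G = 1
  have hDG : D * G = 1 := by
    ext i j
    rw [Matrix.mul_apply]
    have hterm : ∀ k : Fin ℓ, D i k * G k j =
        s * (if (k : ℤ) = (i : ℤ) then g k j else 0) +
        (-1) * (if (k : ℤ) = (i : ℤ) - 1 then g k j else 0) +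
        (-1) * (if (k : ℤ) = (i : ℤ) + 1 then g k j else 0) := by
      intro k
      have habs : (|(i : ℤ) - k| = 1) ↔ ((i:ℤ) - k = 1 ∨ (i:ℤ) - k = -1) :=
        abs_eq (by norm_num)
      rw [hD i k, show (G k j : ℝ) = g k j from rfl]
      by_cases h1 : (i : ℤ) = k
      · rw [if_pos h1, if_pos (by omega), if_neg (by omega), if_neg (by omega)]; ring
      · rw [if_neg h1, if_neg (by omega : ¬ (k:ℤ) = (i:ℤ))]
        by_cases h2 : |(i : ℤ) - k| = 1
        · rw [if_pos h2]
          rw [habs] at h2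
          rcases h2 with h2 | h2
          · rw [if_pos (by omega), if_neg (by omega)]; ring
          · rw [if_neg (by omega), if_pos (by omega)]; ring
        · rw [if_neg h2, habs] at *
          rw [if_neg (by omega), if_neg (by omega)]; ring
    rw [Finset.sum_congr rfl (fun k _ => hterm k)]
    rw [Finset.sum_add_distrib, Finset.sum_add_distrib, ← Finset.mul_sum, ← Finset.mul_sum,
      ← Finset.mul_sum]
    rw [sum_indicator_int ℓ (i:ℤ) (fun a => g a j),
      sum_indicator_int ℓ ((i:ℤ) - 1) (fun a => g a j),
      sum_indicator_int ℓ ((i:ℤ) + 1) (fun a => g a j)]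
    have hi0 : (0:ℤ) ≤ i := Int.ofNat_nonneg _
    have hiℓ : (i:ℤ) < ℓ := by exact_mod_cast i.isLt
    have hj0 : (0:ℤ) ≤ j := Int.ofNat_nonneg _
    have hjℓ : (j:ℤ) < ℓ := by exact_mod_cast j.isLt
    rw [if_pos ⟨hi0, hiℓ⟩]
    -- replace boundary indicators by g values
    have e1 : (if 0 ≤ (i:ℤ) - 1 ∧ (i:ℤ) - 1 < ℓ then g ((i:ℤ)-1) j else 0) = g ((i:ℤ)-1) j := by
      by_cases h : 0 ≤ (i:ℤ) - 1 ∧ (i:ℤ) - 1 < ℓ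
      · rw [if_pos h]
      · rw [if_neg h]
        have : (i:ℤ) - 1 = -1 := by omega
        rw [this, hbdry1 j hj0]
    have e2 : (if 0 ≤ (i:ℤ) + 1 ∧ (i:ℤ) + 1 < ℓ then g ((i:ℤ)+1) j else 0) = g ((i:ℤ)+1) j := by
      by_cases h : 0 ≤ (i:ℤ) + 1 ∧ (i:ℤ) + 1 < ℓ
      · rw [if_pos h]
      · rw [if_neg h]
        have : (i:ℤ) + 1 = (ℓ:ℤ) := by omega
        rw [this, hbdry2 j hjℓ]
    rw [e1, e2]
    -- now prove s * g i j - g (i-1) j - g (i+1) j = δ_{ij}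
    rcases lt_trichotomy (i:ℤ) (j:ℤ) with hij | hij | hij
    · -- i < j
      have h1 : g (i:ℤ) j = u (i:ℤ) * u ((ℓ:ℤ) - 1 - j) / u ℓ := by
        simp only [hg]; rw [min_eq_left (le_of_lt hij), max_eq_right (le_of_lt hij)]
      have h2 : g ((i:ℤ)-1) j = u ((i:ℤ)-1) * u ((ℓ:ℤ) - 1 - j) / u ℓ := by
        simp only [hg]; rw [min_eq_left (by omega), max_eq_right (by omega)]
      have h3 : g ((i:ℤ)+1) j = u ((i:ℤ)+1) * u ((ℓ:ℤ) - 1 - j) / u ℓ := by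
        simp only [hg]; rw [min_eq_left (by omega), max_eq_right (by omega)]
      have hr : u ((i:ℤ)+1) = s * u (i:ℤ) - u ((i:ℤ)-1) := by
        have := hrec ((i:ℤ) - 1)
        rw [show (i:ℤ) - 1 + 2 = (i:ℤ) + 1 by ring, show (i:ℤ) - 1 + 1 = (i:ℤ) by ring] at this
        exact this
      rw [h1, h2, h3, Matrix.one_apply_ne (by intro h; rw [h] at hij; exact lt_irrefl _ hij)]
      field_simp
      linear_combination (-(u ((ℓ:ℤ) - 1 - (j:ℤ)))) * hr
    · -- i = j
      have hijfin : i = j := Fin.ext (by omega)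
      subst hijfin
      have h1 : g (i:ℤ) i = u (i:ℤ) * u ((ℓ:ℤ) - 1 - i) / u ℓ := by
        simp only [hg]; rw [min_self, max_self]
      have h2 : g ((i:ℤ)-1) i = u ((i:ℤ)-1) * u ((ℓ:ℤ) - 1 - i) / u ℓ := by
        simp only [hg]; rw [min_eq_left (by omega), max_eq_right (by omega)]
      have h3 : g ((i:ℤ)+1) i = u (i:ℤ) * u ((ℓ:ℤ) - 2 - i) / u ℓ := by
        simp only [hg]; rw [min_eq_right (by omega), max_eq_left (by omega),
          show (ℓ:ℤ) - 1 - ((i:ℤ)+1) = (ℓ:ℤ) - 2 - i by ring]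
      have hr : u ((i:ℤ)+1) = s * u (i:ℤ) - u ((i:ℤ)-1) := by
        have := hrec ((i:ℤ) - 1)
        rw [show (i:ℤ) - 1 + 2 = (i:ℤ) + 1 by ring, show (i:ℤ) - 1 + 1 = (i:ℤ) by ring] at this
        exact this
      -- product identity
      obtain ⟨b, hb⟩ : ∃ b : ℕ, (b:ℤ) = (ℓ:ℤ) - 1 - (i:ℤ) :=
        ⟨((ℓ:ℤ) - 1 - (i:ℤ)).toNat, Int.toNat_of_nonneg (by omega)⟩
      have hprod := U_prod_aux b (i:ℤ)
      have hprod' : u ((i:ℤ) + b + 1) = u ((i:ℤ)+1) * u b - u (i:ℤ) * u ((b:ℤ) - 1) := by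
        have h := congrArg (Polynomial.eval x) hprod
        simp only [eval_sub, eval_mul] at h
        exact h
      have hbeq : (i:ℤ) + b + 1 = (ℓ:ℤ) := by omega
      have hbeq2 : (b:ℤ) - 1 = (ℓ:ℤ) - 2 - i := by omega
      have hbeq3 : (b:ℤ) = (ℓ:ℤ) - 1 - i := by omega
      rw [hbeq, hbeq2, hbeq3] at hprod'
      rw [h1, h2, h3, Matrix.one_apply_eq]
      field_simp
      linear_combination (-1 : ℝ) * hprod' - (u ((ℓ:ℤ) - 1 - i)) * hr
    · -- i > j
      have h1 : g (i:ℤ) j = u (j:ℤ) * u ((ℓ:ℤ) - 1 - i) / u ℓ := by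
        simp only [hg]; rw [min_eq_right (le_of_lt hij), max_eq_left (le_of_lt hij)]
      have h2 : g ((i:ℤ)-1) j = u (j:ℤ) * u ((ℓ:ℤ) - i) / u ℓ := by
        simp only [hg]; rw [min_eq_right (by omega), max_eq_left (by omega),
          show (ℓ:ℤ) - 1 - ((i:ℤ)-1) = (ℓ:ℤ) - i by ring]
      have h3 : g ((i:ℤ)+1) j = u (j:ℤ) * u ((ℓ:ℤ) - 2 - i) / u ℓ := by
        simp only [hg]; rw [min_eq_right (by omega), max_eq_left (by omega),
          show (ℓ:ℤ) - 1 - ((i:ℤ)+1) = (ℓ:ℤ) - 2 - i by ring]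
      have hr : u ((ℓ:ℤ) - i) = s * u ((ℓ:ℤ) - 1 - i) - u ((ℓ:ℤ) - 2 - i) := by
        have := hrec ((ℓ:ℤ) - 2 - i)
        rw [show (ℓ:ℤ) - 2 - i + 2 = (ℓ:ℤ) - i by ring,
          show (ℓ:ℤ) - 2 - i + 1 = (ℓ:ℤ) - 1 - i by ring] at this
        exact this
      rw [h1, h2, h3, Matrix.one_apply_ne (by intro h; rw [h] at hij; exact lt_irrefl _ hij)]
      field_simp
      linear_combination (-(u (j:ℤ))) * hr
  have hunit : IsUnit D := (Matrix.isUnit_iff_isUnit_det D).mpr (Matrix.isUnit_det_of_right_inverse hDG)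
  refine ⟨hunit, fun i j => ?_⟩
  rw [Matrix.inv_eq_right_inv hDG]
  rfl
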